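/- Remark 2 (necessary condition for the constraint of Theorem 1). Let (Q,U0,U1,U2,V0,V1,V2,X1,X2,Y1,Y2,Z) be finite random variables whose joint pmf factors as p(q)·p(u0|q)·p(u1,u2|u0)·p(v0|q)·p(v1,v2|v0)·p(x1|u0,u1,u2)·p(x2|v0,v1,v2)·p(y1,y2,z|x1,x2). If the inequality I(U1,U2,V1,V2;Z|U0,V0) ≤ I(U1,V1;Z|U0,V0) + I(U2,V2;Z|U0,V0) − I(U1;U2|U0) − I(V1;V2|V0) holds, then necessarily I(U1,V1;U2,V2|Q,U0,V0,Z) = 0. -/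

import Mathlib

set_option synthInstance.maxSize 4000
set_option maxHeartbeats 1000000

open Finset Filter

noncomputable def entRV {Ω : Type*} [Fintype Ω] {α : Type*} [Fintype α] [DecidableEq α]
    (p : Ω → ℝ) (X : Ω → α) : ℝ :=
  -∑ a : α, (∑ ω : Ω, if X ω = a then p ω else 0) *
      Real.logb 2 (∑ ω : Ω, if X ω = a then p ω else 0)

noncomputable def condEntRV {Ω : Type*} [Fintype Ω] {α β : Type*} [Fintype α] [DecidableEq α]
    [Fintype β] [DecidableEq β] (p : Ω → ℝ) (X : Ω → α) (Y : Ω → β) : ℝ :=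
  entRV p (fun ω => (X ω, Y ω)) - entRV p Y

noncomputable def miRV {Ω : Type*} [Fintype Ω] {α β : Type*} [Fintype α] [DecidableEq α]
    [Fintype β] [DecidableEq β] (p : Ω → ℝ) (X : Ω → α) (Y : Ω → β) : ℝ :=
  entRV p X + entRV p Y - entRV p (fun ω => (X ω, Y ω))

noncomputable def cmiRV {Ω : Type*} [Fintype Ω] {α β γ : Type*} [Fintype α] [DecidableEq α]
    [Fintype β] [DecidableEq β] [Fintype γ] [DecidableEq γ]
    (p : Ω → ℝ) (X : Ω → α) (Y : Ω → β) (Z : Ω → γ) : ℝ :=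
  entRV p (fun ω => (X ω, Z ω)) + entRV p (fun ω => (Y ω, Z ω))
    - entRV p (fun ω => (X ω, Y ω, Z ω)) - entRV p Z

def IsPMF {α : Type*} [Fintype α] (p : α → ℝ) : Prop :=
  (∀ a, 0 ≤ p a) ∧ ∑ a, p a = 1

def IsKernel {α β : Type*} [Fintype β] (k : α → β → ℝ) : Prop :=
  ∀ a, (∀ b, 0 ≤ k a b) ∧ ∑ b, k a b = 1

structure Channel2 (X1 X2 Y1 Y2 Zc : Type) [Fintype X1] [Fintype X2]
    [Fintype Y1] [Fintype Y2] [Fintype Zc] where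
  W : X1 → X2 → Y1 → Y2 → Zc → ℝ
  nonneg : ∀ x1 x2 y1 y2 z, 0 ≤ W x1 x2 y1 y2 z
  sum_one : ∀ x1 x2, ∑ y1 : Y1, ∑ y2 : Y2, ∑ z : Zc, W x1 x2 y1 y2 z = 1

structure Code2 (X1 X2 Y1 Y2 : Type) [Fintype X1] [Fintype X2]
    (n M1 M2 : ℕ) where
  enc1 : Fin M1 → (Fin n → X1) → ℝ
  enc1_nonneg : ∀ w x, 0 ≤ enc1 w x
  enc1_sum_one : ∀ w, ∑ x : Fin n → X1, enc1 w x = 1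
  enc2 : Fin M2 → (Fin n → X2) → ℝ
  enc2_nonneg : ∀ w x, 0 ≤ enc2 w x
  enc2_sum_one : ∀ w, ∑ x : Fin n → X2, enc2 w x = 1
  dec1 : (Fin n → Y1) → Fin M1 × Fin M2
  dec2 : (Fin n → Y2) → Fin M1 × Fin M2

section ChannelDefs

variable {X1 X2 Y1 Y2 Zc : Type} [Fintype X1] [DecidableEq X1] [Fintype X2] [DecidableEq X2]
  [Fintype Y1] [DecidableEq Y1] [Fintype Y2] [DecidableEq Y2] [Fintype Zc] [DecidableEq Zc]

noncomputable def jointPMF (ch : Channel2 X1 X2 Y1 Y2 Zc) {n M1 M2 : ℕ}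
    (c : Code2 X1 X2 Y1 Y2 n M1 M2) :
    Fin M1 × Fin M2 × (Fin n → X1) × (Fin n → X2) × (Fin n → Y1) × (Fin n → Y2) ×
      (Fin n → Zc) → ℝ :=
  fun ω => ((M1 : ℝ) * (M2 : ℝ))⁻¹ * c.enc1 ω.1 ω.2.2.1 * c.enc2 ω.2.1 ω.2.2.2.1 *
    ∏ i : Fin n, ch.W (ω.2.2.1 i) (ω.2.2.2.1 i) (ω.2.2.2.2.1 i) (ω.2.2.2.2.2.1 i)
      (ω.2.2.2.2.2.2 i)

noncomputable def errProb (ch : Channel2 X1 X2 Y1 Y2 Zc) {n M1 M2 : ℕ}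
    (c : Code2 X1 X2 Y1 Y2 n M1 M2) : ℝ :=
  ∑ ω : Fin M1 × Fin M2 × (Fin n → X1) × (Fin n → X2) × (Fin n → Y1) × (Fin n → Y2) ×
      (Fin n → Zc),
    if c.dec1 ω.2.2.2.2.1 ≠ (ω.1, ω.2.1) ∨ c.dec2 ω.2.2.2.2.2.1 ≠ (ω.1, ω.2.1) then
      jointPMF ch c ω else 0

noncomputable def leak (ch : Channel2 X1 X2 Y1 Y2 Zc) {n M1 M2 : ℕ}
    (c : Code2 X1 X2 Y1 Y2 n M1 M2) : ℝ :=
  miRV (jointPMF ch c) (fun ω => (ω.1, ω.2.1)) (fun ω => ω.2.2.2.2.2.2)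

/-- A rate pair is achievable under weak secrecy. -/
def AchievableWeak (ch : Channel2 X1 X2 Y1 Y2 Zc) (R1 R2 : ℝ) : Prop :=
  ∃ (M1 M2 : ℕ → ℕ) (c : ∀ n, Code2 X1 X2 Y1 Y2 n (M1 n) (M2 n)),
    (∀ n : ℕ, (2 : ℝ) ^ ((n : ℝ) * R1) ≤ (M1 n : ℝ)) ∧
    (∀ n : ℕ, (2 : ℝ) ^ ((n : ℝ) * R2) ≤ (M2 n : ℝ)) ∧
    Tendsto (fun n : ℕ => errProb ch (c n)) atTop (nhds 0) ∧
    Tendsto (fun n : ℕ => ((n : ℝ))⁻¹ * leak ch (c n)) atTop (nhds 0)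

/-- A rate pair is achievable under strong secrecy. -/
def AchievableStrong (ch : Channel2 X1 X2 Y1 Y2 Zc) (R1 R2 : ℝ) : Prop :=
  ∃ (M1 M2 : ℕ → ℕ) (c : ∀ n, Code2 X1 X2 Y1 Y2 n (M1 n) (M2 n)),
    (∀ n : ℕ, (2 : ℝ) ^ ((n : ℝ) * R1) ≤ (M1 n : ℝ)) ∧
    (∀ n : ℕ, (2 : ℝ) ^ ((n : ℝ) * R2) ≤ (M2 n : ℝ)) ∧
    Tendsto (fun n : ℕ => errProb ch (c n)) atTop (nhds 0) ∧
    Tendsto (fun n : ℕ => leak ch (c n)) atTop (nhds 0)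

end ChannelDefs


structure SL (Q U0 U1 U2 V0 V1 V2 X1 X2 Y1 Y2 Zc : Type) where
  q : Q
  u0 : U0
  u1 : U1
  u2 : U2
  v0 : V0
  v1 : V1
  v2 : V2
  x1 : X1
  x2 : X2
  y1 : Y1
  y2 : Y2
  z : Zc
  deriving DecidableEq

def SL.equivProd {Q U0 U1 U2 V0 V1 V2 X1 X2 Y1 Y2 Zc : Type} :
    SL Q U0 U1 U2 V0 V1 V2 X1 X2 Y1 Y2 Zc ≃
      Q × U0 × U1 × U2 × V0 × V1 × V2 × X1 × X2 × Y1 × Y2 × Zc where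
  toFun s := (s.q, s.u0, s.u1, s.u2, s.v0, s.v1, s.v2, s.x1, s.x2, s.y1, s.y2, s.z)
  invFun p := ⟨p.1, p.2.1, p.2.2.1, p.2.2.2.1, p.2.2.2.2.1, p.2.2.2.2.2.1,
    p.2.2.2.2.2.2.1, p.2.2.2.2.2.2.2.1, p.2.2.2.2.2.2.2.2.1, p.2.2.2.2.2.2.2.2.2.1,
    p.2.2.2.2.2.2.2.2.2.2.1, p.2.2.2.2.2.2.2.2.2.2.2⟩
  left_inv _ := rfl
  right_inv _ := rfl

instance {Q U0 U1 U2 V0 V1 V2 X1 X2 Y1 Y2 Zc : Type} [Fintype Q] [Fintype U0]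
    [Fintype U1] [Fintype U2] [Fintype V0] [Fintype V1] [Fintype V2] [Fintype X1]
    [Fintype X2] [Fintype Y1] [Fintype Y2] [Fintype Zc] :
    Fintype (SL Q U0 U1 U2 V0 V1 V2 X1 X2 Y1 Y2 Zc) :=
  Fintype.ofEquiv _ SL.equivProd.symm

noncomputable def pm {Ω : Type*} [Fintype Ω] {α : Type*} [Fintype α] [DecidableEq α]
    (p : Ω → ℝ) (X : Ω → α) : α → ℝ :=
  fun a => ∑ ω : Ω, if X ω = a then p ω else 0

lemma entRV_eq {Ω : Type*} [Fintype Ω] {α : Type*} [Fintype α] [DecidableEq α]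
    (p : Ω → ℝ) (X : Ω → α) :
    entRV p X = -∑ a : α, pm p X a * Real.logb 2 (pm p X a) := rfl

section Core
variable {Ω α β γ : Type*} [Fintype Ω] [Fintype α] [DecidableEq α] [Fintype β]
  [DecidableEq β] [Fintype γ] [DecidableEq γ]

lemma pm_nonneg {p : Ω → ℝ} (hp : ∀ ω, 0 ≤ p ω) (X : Ω → α) (a : α) : 0 ≤ pm p X a := by
  apply Finset.sum_nonneg; intro ω _; split <;> simp [hp ω]

lemma pm_proj13 (p : Ω → ℝ) (X : Ω → α) (Y : Ω → β) (Z : Ω → γ) (a : α) (c : γ) :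
    pm p (fun ω => (X ω, Z ω)) (a, c) = ∑ b : β, pm p (fun ω => (X ω, Y ω, Z ω)) (a, b, c) := by
  unfold pm
  rw [Finset.sum_comm]
  apply Finset.sum_congr rfl
  intro ω _
  by_cases h1 : X ω = a <;> by_cases h2 : Z ω = c <;> simp [Prod.ext_iff, h1, h2]

lemma pm_proj23 (p : Ω → ℝ) (X : Ω → α) (Y : Ω → β) (Z : Ω → γ) (b : β) (c : γ) :
    pm p (fun ω => (Y ω, Z ω)) (b, c) = ∑ a : α, pm p (fun ω => (X ω, Y ω, Z ω)) (a, b, c) := by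
  unfold pm
  rw [Finset.sum_comm]
  apply Finset.sum_congr rfl
  intro ω _
  by_cases h1 : Y ω = b <;> by_cases h2 : Z ω = c <;> simp [Prod.ext_iff, h1, h2]

lemma pm_proj2pair (p : Ω → ℝ) (Y : Ω → β) (Z : Ω → γ) (c : γ) :
    pm p Z c = ∑ b : β, pm p (fun ω => (Y ω, Z ω)) (b, c) := by
  unfold pm
  rw [Finset.sum_comm]
  apply Finset.sum_congr rfl
  intro ω _
  by_cases h2 : Z ω = c <;> simp [Prod.ext_iff, h2]

lemma pm_proj3 (p : Ω → ℝ) (X : Ω → α) (Y : Ω → β) (Z : Ω → γ) (c : γ) :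
    pm p Z c = ∑ b : β, ∑ a : α, pm p (fun ω => (X ω, Y ω, Z ω)) (a, b, c) := by
  rw [pm_proj2pair p Y Z c]
  exact Finset.sum_congr rfl fun b _ => pm_proj23 p X Y Z b c

lemma cmi_eq_sum (p : Ω → ℝ) (X : Ω → α) (Y : Ω → β) (Z : Ω → γ) :
    cmiRV p X Y Z = ∑ a : α, ∑ b : β, ∑ c : γ,
      pm p (fun ω => (X ω, Y ω, Z ω)) (a, b, c) *
        (Real.logb 2 (pm p (fun ω => (X ω, Y ω, Z ω)) (a, b, c))
          + Real.logb 2 (∑ a' : α, ∑ b' : β, pm p (fun ω => (X ω, Y ω, Z ω)) (a', b', c))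
          - Real.logb 2 (∑ b' : β, pm p (fun ω => (X ω, Y ω, Z ω)) (a, b', c))
          - Real.logb 2 (∑ a' : α, pm p (fun ω => (X ω, Y ω, Z ω)) (a', b, c))) := by
  set P := pm p (fun ω => (X ω, Y ω, Z ω)) with hP
  have hXZ : entRV p (fun ω => (X ω, Z ω))
      = -∑ a : α, ∑ b : β, ∑ c : γ, P (a, b, c) * Real.logb 2 (∑ b' : β, P (a, b', c)) := by
    rw [entRV_eq, Fintype.sum_prod_type]
    congr 1
    apply Finset.sum_congr rfl; intro a _
    rw [Finset.sum_comm]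
    apply Finset.sum_congr rfl; intro c _
    rw [pm_proj13 p X Y Z a c, Finset.sum_mul]
  have hYZ : entRV p (fun ω => (Y ω, Z ω))
      = -∑ a : α, ∑ b : β, ∑ c : γ, P (a, b, c) * Real.logb 2 (∑ a' : α, P (a', b, c)) := by
    rw [entRV_eq, Fintype.sum_prod_type]
    congr 1
    calc ∑ b : β, ∑ c : γ, pm p (fun ω => (Y ω, Z ω)) (b, c) *
            Real.logb 2 (pm p (fun ω => (Y ω, Z ω)) (b, c))
        = ∑ b : β, ∑ a : α, ∑ c : γ, P (a, b, c) * Real.logb 2 (∑ a' : α, P (a', b, c)) := by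
          apply Finset.sum_congr rfl; intro b _
          calc ∑ c : γ, pm p (fun ω => (Y ω, Z ω)) (b, c) *
                  Real.logb 2 (pm p (fun ω => (Y ω, Z ω)) (b, c))
              = ∑ c : γ, ∑ a : α, P (a, b, c) * Real.logb 2 (∑ a' : α, P (a', b, c)) := by
                apply Finset.sum_congr rfl; intro c _
                rw [pm_proj23 p X Y Z b c, Finset.sum_mul]
            _ = ∑ a : α, ∑ c : γ, P (a, b, c) * Real.logb 2 (∑ a' : α, P (a', b, c)) :=
                Finset.sum_comm
      _ = ∑ a : α, ∑ b : β, ∑ c : γ, P (a, b, c) * Real.logb 2 (∑ a' : α, P (a', b, c)) :=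
          Finset.sum_comm
  have hZ : entRV p Z
      = -∑ a : α, ∑ b : β, ∑ c : γ, P (a, b, c) *
          Real.logb 2 (∑ a' : α, ∑ b' : β, P (a', b', c)) := by
    rw [entRV_eq]
    congr 1
    have h1 : ∀ c : γ, pm p Z c * Real.logb 2 (pm p Z c)
        = ∑ a : α, ∑ b : β, P (a, b, c) * Real.logb 2 (∑ a' : α, ∑ b' : β, P (a', b', c)) := by
      intro c
      have h2 : pm p Z c = ∑ a : α, ∑ b : β, P (a, b, c) := by
        rw [pm_proj3 p X Y Z c]; exact Finset.sum_comm
      rw [h2, Finset.sum_mul]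
      apply Finset.sum_congr rfl; intro a _
      rw [Finset.sum_mul]
    rw [Finset.sum_congr rfl (fun c _ => h1 c)]
    rw [Finset.sum_comm]
    apply Finset.sum_congr rfl; intro a _
    exact Finset.sum_comm
  have hXYZ : entRV p (fun ω => (X ω, Y ω, Z ω))
      = -∑ a : α, ∑ b : β, ∑ c : γ, P (a, b, c) * Real.logb 2 (P (a, b, c)) := by
    rw [entRV_eq, Fintype.sum_prod_type]
    congr 1
    apply Finset.sum_congr rfl; intro a _
    rw [Fintype.sum_prod_type]
  unfold cmiRV
  rw [hXZ, hYZ, hZ, hXYZ]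
  rw [show ∀ A B C D : ℝ, -A + -B - -C - -D = (C + D) - (A + B) from fun _ _ _ _ => by ring]
  simp only [← Finset.sum_add_distrib, ← Finset.sum_sub_distrib]
  apply Finset.sum_congr rfl; intro a _
  apply Finset.sum_congr rfl; intro b _
  apply Finset.sum_congr rfl; intro c _
  ring

lemma single_le_sum' {f : α → ℝ} (hf : ∀ a, 0 ≤ f a) (a : α) : f a ≤ ∑ a' : α, f a' :=
  Finset.single_le_sum (fun a' _ => hf a') (Finset.mem_univ a)

lemma cmi_eq_zero_of_fac {p : Ω → ℝ} (hp : ∀ ω, 0 ≤ p ω) (X : Ω → α) (Y : Ω → β) (Z : Ω → γ)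
    (hfac : ∀ a b c, pm p (fun ω => (X ω, Y ω, Z ω)) (a, b, c) *
        (∑ a' : α, ∑ b' : β, pm p (fun ω => (X ω, Y ω, Z ω)) (a', b', c))
      = (∑ b' : β, pm p (fun ω => (X ω, Y ω, Z ω)) (a, b', c)) *
        (∑ a' : α, pm p (fun ω => (X ω, Y ω, Z ω)) (a', b, c))) :
    cmiRV p X Y Z = 0 := by
  rw [cmi_eq_sum]
  set P := pm p (fun ω => (X ω, Y ω, Z ω)) with hPdef
  have hPnn : ∀ t, 0 ≤ P t := pm_nonneg hp _
  apply Finset.sum_eq_zero; intro a _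
  apply Finset.sum_eq_zero; intro b _
  apply Finset.sum_eq_zero; intro c _
  rcases eq_or_lt_of_le (hPnn (a, b, c)) with h | h
  · rw [← h, zero_mul]
  · have hPX : 0 < ∑ b' : β, P (a, b', c) :=
      lt_of_lt_of_le h (single_le_sum' (fun b' => hPnn (a, b', c)) b)
    have hPY : 0 < ∑ a' : α, P (a', b, c) :=
      lt_of_lt_of_le h (single_le_sum' (fun a' => hPnn (a', b, c)) a)
    have hPZ : 0 < ∑ a' : α, ∑ b' : β, P (a', b', c) :=
      lt_of_lt_of_le hPY (Finset.sum_le_sum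
        (fun a' _ => single_le_sum' (fun b' => hPnn (a', b', c)) b))
    have key : Real.logb 2 (P (a, b, c)) + Real.logb 2 (∑ a' : α, ∑ b' : β, P (a', b', c))
        - Real.logb 2 (∑ b' : β, P (a, b', c)) - Real.logb 2 (∑ a' : α, P (a', b, c)) = 0 := by
      rw [show ∀ A B C D : ℝ, A + B - C - D = (A + B) - (C + D) from fun _ _ _ _ => by ring]
      rw [sub_eq_zero, ← Real.logb_mul (ne_of_gt h) (ne_of_gt hPZ),
        ← Real.logb_mul (ne_of_gt hPX) (ne_of_gt hPY), hfac a b c]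
    rw [key, mul_zero]

lemma cmi_nonneg {p : Ω → ℝ} (hp : ∀ ω, 0 ≤ p ω) (X : Ω → α) (Y : Ω → β) (Z : Ω → γ) :
    0 ≤ cmiRV p X Y Z := by
  classical
  rw [cmi_eq_sum]
  set P := pm p (fun ω => (X ω, Y ω, Z ω)) with hPdef
  have hPnn : ∀ t, 0 ≤ P t := pm_nonneg hp _
  have hlog2 : (0:ℝ) < Real.log 2 := Real.log_pos (by norm_num)
  have hPXnn : ∀ a c, 0 ≤ ∑ b' : β, P (a, b', c) :=
    fun a c => Finset.sum_nonneg fun b' _ => hPnn (a, b', c)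
  have hPYnn : ∀ b c, 0 ≤ ∑ a' : α, P (a', b, c) :=
    fun b c => Finset.sum_nonneg fun a' _ => hPnn (a', b, c)
  have hPZnn : ∀ c, 0 ≤ ∑ a' : α, ∑ b' : β, P (a', b', c) :=
    fun c => Finset.sum_nonneg fun a' _ => hPXnn a' c
  have key : ∀ a b c,
      (P (a, b, c) - (if 0 < P (a, b, c) then
          (∑ b' : β, P (a, b', c)) * (∑ a' : α, P (a', b, c)) /
            (∑ a' : α, ∑ b' : β, P (a', b', c)) else 0)) / Real.log 2
      ≤ P (a, b, c) *
        (Real.logb 2 (P (a, b, c))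
          + Real.logb 2 (∑ a' : α, ∑ b' : β, P (a', b', c))
          - Real.logb 2 (∑ b' : β, P (a, b', c))
          - Real.logb 2 (∑ a' : α, P (a', b, c))) := by
    intro a b c
    rcases eq_or_lt_of_le (hPnn (a, b, c)) with h | h
    · rw [← h]; simp
    · rw [if_pos h]
      have hPX : 0 < ∑ b' : β, P (a, b', c) :=
        lt_of_lt_of_le h (single_le_sum' (fun b' => hPnn (a, b', c)) b)
      have hPY : 0 < ∑ a' : α, P (a', b, c) :=
        lt_of_lt_of_le h (single_le_sum' (fun a' => hPnn (a', b, c)) a)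
      have hPZ : 0 < ∑ a' : α, ∑ b' : β, P (a', b', c) :=
        lt_of_lt_of_le hPY (Finset.sum_le_sum
          (fun a' _ => single_le_sum' (fun b' => hPnn (a', b', c)) b))
      set t : ℝ := P (a, b, c) * (∑ a' : α, ∑ b' : β, P (a', b', c)) /
        ((∑ b' : β, P (a, b', c)) * (∑ a' : α, P (a', b, c))) with ht
      have htpos : 0 < t := by positivity
      have hlog : Real.logb 2 (P (a, b, c))
          + Real.logb 2 (∑ a' : α, ∑ b' : β, P (a', b', c))
          - Real.logb 2 (∑ b' : β, P (a, b', c))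
          - Real.logb 2 (∑ a' : α, P (a', b, c)) = Real.logb 2 t := by
        rw [ht, Real.logb_div (by positivity) (by positivity),
          Real.logb_mul (ne_of_gt h) (ne_of_gt hPZ),
          Real.logb_mul (ne_of_gt hPX) (ne_of_gt hPY)]
        ring
      rw [hlog]
      have hln : 1 - 1 / t ≤ Real.log t := by
        have h2 := Real.log_le_sub_one_of_pos (x := 1 / t) (by positivity)
        rw [Real.log_div one_ne_zero (ne_of_gt htpos), Real.log_one] at h2
        linarith
      have h1t : P (a, b, c) / t = (∑ b' : β, P (a, b', c)) * (∑ a' : α, P (a', b, c)) /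
          (∑ a' : α, ∑ b' : β, P (a', b', c)) := by
        rw [ht]
        field_simp
      rw [Real.logb, ← mul_div_assoc, div_le_div_iff_of_pos_right hlog2, ← h1t]
      have := mul_le_mul_of_nonneg_left hln (le_of_lt h)
      calc P (a, b, c) - P (a, b, c) / t = P (a, b, c) * (1 - 1 / t) := by ring
        _ ≤ P (a, b, c) * Real.log t := this
  refine le_trans ?_ (Finset.sum_le_sum fun a _ => Finset.sum_le_sum fun b _ =>
    Finset.sum_le_sum fun c _ => key a b c)
  simp only [← Finset.sum_div]
  apply div_nonneg _ (le_of_lt hlog2)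
  simp only [Finset.sum_sub_distrib]
  rw [sub_nonneg]
  have step1 : ∀ a b c, (if 0 < P (a, b, c) then
      (∑ b' : β, P (a, b', c)) * (∑ a' : α, P (a', b, c)) /
        (∑ a' : α, ∑ b' : β, P (a', b', c)) else 0)
      ≤ (if 0 < ∑ a' : α, ∑ b' : β, P (a', b', c) then
      (∑ b' : β, P (a, b', c)) * (∑ a' : α, P (a', b, c)) /
        (∑ a' : α, ∑ b' : β, P (a', b', c)) else 0) := by
    intro a b c
    by_cases h : 0 < P (a, b, c)
    · rw [if_pos h, if_pos]
      have hPY : 0 < ∑ a' : α, P (a', b, c) :=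
        lt_of_lt_of_le h (single_le_sum' (fun a' => hPnn (a', b, c)) a)
      exact lt_of_lt_of_le hPY (Finset.sum_le_sum
        (fun a' _ => single_le_sum' (fun b' => hPnn (a', b', c)) b))
    · rw [if_neg h]
      split
      · exact div_nonneg (mul_nonneg (hPXnn a c) (hPYnn b c)) (hPZnn c)
      · exact le_refl _
  have reorder : ∀ F : α → β → γ → ℝ,
      ∑ a : α, ∑ b : β, ∑ c : γ, F a b c = ∑ c : γ, ∑ a : α, ∑ b : β, F a b c := by
    intro F
    calc ∑ a : α, ∑ b : β, ∑ c : γ, F a b c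
        = ∑ a : α, ∑ c : γ, ∑ b : β, F a b c :=
          Finset.sum_congr rfl fun a _ => Finset.sum_comm
      _ = ∑ c : γ, ∑ a : α, ∑ b : β, F a b c := Finset.sum_comm
  have h4 : ∀ c : γ, (∑ a : α, ∑ b : β, (if 0 < ∑ a' : α, ∑ b' : β, P (a', b', c) then
      (∑ b' : β, P (a, b', c)) * (∑ a' : α, P (a', b, c)) /
        (∑ a' : α, ∑ b' : β, P (a', b', c)) else 0))
      ≤ ∑ a : α, ∑ b : β, P (a, b, c) := by
    intro c
    by_cases hc : 0 < ∑ a' : α, ∑ b' : β, P (a', b', c)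
    · simp only [if_pos hc]
      have hb : ∑ b : β, ∑ a' : α, P (a', b, c) = ∑ a' : α, ∑ b' : β, P (a', b', c) :=
        Finset.sum_comm
      have : (∑ a : α, ∑ b : β, (∑ b' : β, P (a, b', c)) * (∑ a' : α, P (a', b, c)) /
          (∑ a' : α, ∑ b' : β, P (a', b', c))) = ∑ a : α, ∑ b : β, P (a, b, c) := by
        calc ∑ a : α, ∑ b : β, (∑ b' : β, P (a, b', c)) * (∑ a' : α, P (a', b, c)) /
              (∑ a' : α, ∑ b' : β, P (a', b', c))
            = ∑ a : α, (∑ b' : β, P (a, b', c)) * ((∑ b : β, ∑ a' : α, P (a', b, c)) /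
              (∑ a' : α, ∑ b' : β, P (a', b', c))) := by
              apply Finset.sum_congr rfl; intro a _
              rw [Finset.sum_div, Finset.mul_sum]
              apply Finset.sum_congr rfl; intro b _
              rw [mul_div_assoc]
          _ = (∑ a : α, ∑ b' : β, P (a, b', c)) * ((∑ b : β, ∑ a' : α, P (a', b, c)) /
              (∑ a' : α, ∑ b' : β, P (a', b', c))) := by rw [← Finset.sum_mul]
          _ = ∑ a : α, ∑ b : β, P (a, b, c) := by
              rw [hb, div_self (ne_of_gt hc), mul_one]
      rw [this]
    · simp only [if_neg hc]
      simp only [Finset.sum_const_zero]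
      exact Finset.sum_nonneg fun a _ => Finset.sum_nonneg fun b _ => hPnn (a, b, c)
  calc ∑ a : α, ∑ b : β, ∑ c : γ, (if 0 < P (a, b, c) then
        (∑ b' : β, P (a, b', c)) * (∑ a' : α, P (a', b, c)) /
          (∑ a' : α, ∑ b' : β, P (a', b', c)) else 0)
      ≤ ∑ a : α, ∑ b : β, ∑ c : γ, (if 0 < ∑ a' : α, ∑ b' : β, P (a', b', c) then
        (∑ b' : β, P (a, b', c)) * (∑ a' : α, P (a', b, c)) /
          (∑ a' : α, ∑ b' : β, P (a', b', c)) else 0) :=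
        Finset.sum_le_sum fun a _ => Finset.sum_le_sum fun b _ =>
          Finset.sum_le_sum fun c _ => step1 a b c
    _ = ∑ c : γ, ∑ a : α, ∑ b : β, (if 0 < ∑ a' : α, ∑ b' : β, P (a', b', c) then
        (∑ b' : β, P (a, b', c)) * (∑ a' : α, P (a', b, c)) /
          (∑ a' : α, ∑ b' : β, P (a', b', c)) else 0) := reorder _
    _ ≤ ∑ c : γ, ∑ a : α, ∑ b : β, P (a, b, c) := Finset.sum_le_sum fun c _ => h4 c
    _ = ∑ a : α, ∑ b : β, ∑ c : γ, P (a, b, c) := (reorder _).symm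

end Core

section Struct
variable {Ω : Type*} [Fintype Ω]

lemma pm_congr {α β : Type*} [Fintype α] [DecidableEq α] [Fintype β] [DecidableEq β]
    (p : Ω → ℝ) (X : Ω → α) {g : α → β}
    (hg : Function.Injective g) (a : α) :
    pm p (fun ω => g (X ω)) (g a) = pm p X a := by
  unfold pm
  apply Finset.sum_congr rfl
  intro ω _
  congr 1
  simp [hg.eq_iff]

lemma ent_congr {α β : Type*} [Fintype α] [DecidableEq α] [Fintype β] [DecidableEq β]
    (p : Ω → ℝ) {X : Ω → α} {Y : Ω → β} {g : α → β}
    (hg : Function.Injective g) (hXY : ∀ ω, Y ω = g (X ω)) :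
    entRV p Y = entRV p X := by
  have hY : Y = fun ω => g (X ω) := funext hXY
  subst hY
  rw [entRV_eq, entRV_eq]
  congr 1
  rw [← Finset.sum_subset (Finset.subset_univ (Finset.image g Finset.univ))
    (by
      intro b _ hb
      have : pm p (fun ω => g (X ω)) b = 0 := by
        unfold pm
        apply Finset.sum_eq_zero
        intro ω _
        rw [if_neg]
        intro h
        exact hb (Finset.mem_image.mpr ⟨X ω, Finset.mem_univ _, h⟩)
      simp [this])]
  rw [Finset.sum_image (by intro x _ y _ h; exact hg h)]
  apply Finset.sum_congr rfl
  intro a _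
  rw [pm_congr p X hg a]

variable {α β γ δ α' β' γ' : Type*} [Fintype α] [DecidableEq α] [Fintype β] [DecidableEq β]
  [Fintype γ] [DecidableEq γ] [Fintype δ] [DecidableEq δ] [Fintype α'] [DecidableEq α']
  [Fintype β'] [DecidableEq β'] [Fintype γ'] [DecidableEq γ']

lemma cmi_congr (p : Ω → ℝ) {X : Ω → α} {Y : Ω → β} {Z : Ω → γ}
    {X' : Ω → α'} {Y' : Ω → β'} {Z' : Ω → γ'}
    {gX : α → α'} {gY : β → β'} {gZ : γ → γ'}
    (hgX : Function.Injective gX) (hgY : Function.Injective gY)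
    (hgZ : Function.Injective gZ)
    (hX : ∀ ω, X' ω = gX (X ω)) (hY : ∀ ω, Y' ω = gY (Y ω))
    (hZ : ∀ ω, Z' ω = gZ (Z ω)) :
    cmiRV p X' Y' Z' = cmiRV p X Y Z := by
  unfold cmiRV
  rw [ent_congr p (X := fun ω => (X ω, Z ω)) (hgX.prodMap hgZ)
      (fun ω => by simp [hX, hZ, Prod.map]),
    ent_congr p (X := fun ω => (Y ω, Z ω)) (hgY.prodMap hgZ)
      (fun ω => by simp [hY, hZ, Prod.map]),
    ent_congr p (X := fun ω => (X ω, Y ω, Z ω)) (hgX.prodMap (hgY.prodMap hgZ))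
      (fun ω => by simp [hX, hY, hZ, Prod.map]),
    ent_congr p (X := Z) hgZ hZ]

lemma cmi_symm (p : Ω → ℝ) (X : Ω → α) (Y : Ω → β) (Z : Ω → γ) :
    cmiRV p X Y Z = cmiRV p Y X Z := by
  unfold cmiRV
  rw [ent_congr p (g := fun t : β × α × γ => (t.2.1, t.1, t.2.2))
    (X := fun ω => (Y ω, X ω, Z ω)) (Y := fun ω => (X ω, Y ω, Z ω))
    (by intro a b h; simp only [Prod.ext_iff] at h ⊢; tauto) (fun ω => rfl)]
  ring

lemma cmi_chain (p : Ω → ℝ) (X : Ω → α) (Y : Ω → β) (W : Ω → δ) (Z : Ω → γ) :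
    cmiRV p X (fun ω => (Y ω, W ω)) Z
      = cmiRV p X Y Z + cmiRV p X W (fun ω => (Y ω, Z ω)) := by
  unfold cmiRV
  rw [ent_congr p (g := fun t : δ × β × γ => ((t.2.1, t.1), t.2.2))
    (X := fun ω => (W ω, Y ω, Z ω)) (Y := fun ω => ((Y ω, W ω), Z ω))
    (by intro a b h; simp only [Prod.ext_iff] at h ⊢; tauto) (fun ω => rfl)]
  rw [ent_congr p (g := fun t : α × δ × β × γ => (t.1, (t.2.2.1, t.2.1), t.2.2.2))
    (X := fun ω => (X ω, W ω, Y ω, Z ω)) (Y := fun ω => (X ω, (Y ω, W ω), Z ω))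
    (by intro a b h; simp only [Prod.ext_iff] at h ⊢; tauto) (fun ω => rfl)]
  ring

end Struct

section Derived
variable {Ω : Type*} [Fintype Ω] {α β γ δ : Type*} [Fintype α] [DecidableEq α]
  [Fintype β] [DecidableEq β] [Fintype γ] [DecidableEq γ] [Fintype δ] [DecidableEq δ]

lemma pm_proj1pair (p : Ω → ℝ) (A : Ω → α) (B : Ω → β) (a : α) :
    pm p A a = ∑ b : β, pm p (fun ω => (A ω, B ω)) (a, b) := by
  unfold pm
  rw [Finset.sum_comm]
  apply Finset.sum_congr rfl
  intro ω _
  by_cases h1 : A ω = a <;> simp [Prod.ext_iff, h1]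

lemma cmi_drop {p : Ω → ℝ} (hp : ∀ ω, 0 ≤ p ω) {X : Ω → α} {Y : Ω → β} {W : Ω → δ}
    {Z : Ω → γ} (h : cmiRV p X (fun ω => (Y ω, W ω)) Z = 0) : cmiRV p X Y Z = 0 := by
  have hc := cmi_chain p X Y W Z
  have h1 := cmi_nonneg hp X Y Z
  have h2 := cmi_nonneg hp X W (fun ω => (Y ω, Z ω))
  linarith

lemma cmi_move {p : Ω → ℝ} (hp : ∀ ω, 0 ≤ p ω) {X : Ω → α} {Y : Ω → β} {W : Ω → δ}
    {Z : Ω → γ} (h : cmiRV p X (fun ω => (Y ω, W ω)) Z = 0) :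
    cmiRV p X W (fun ω => (Y ω, Z ω)) = 0 := by
  have hc := cmi_chain p X Y W Z
  have h1 := cmi_nonneg hp X Y Z
  have h2 := cmi_nonneg hp X W (fun ω => (Y ω, Z ω))
  linarith

lemma cmi_congrX {α' : Type*} [Fintype α'] [DecidableEq α'] (p : Ω → ℝ) {X : Ω → α}
    {X' : Ω → α'} (Y : Ω → β) (Z : Ω → γ) {g : α → α'} (hg : Function.Injective g)
    (hX : ∀ ω, X' ω = g (X ω)) : cmiRV p X' Y Z = cmiRV p X Y Z :=
  cmi_congr p hg Function.injective_id Function.injective_id hX (fun _ => rfl) (fun _ => rfl)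

lemma cmi_congrY {β' : Type*} [Fintype β'] [DecidableEq β'] (p : Ω → ℝ) (X : Ω → α)
    {Y : Ω → β} {Y' : Ω → β'} (Z : Ω → γ) {g : β → β'} (hg : Function.Injective g)
    (hY : ∀ ω, Y' ω = g (Y ω)) : cmiRV p X Y' Z = cmiRV p X Y Z :=
  cmi_congr p Function.injective_id hg Function.injective_id (fun _ => rfl) hY (fun _ => rfl)

lemma cmi_congrZ {γ' : Type*} [Fintype γ'] [DecidableEq γ'] (p : Ω → ℝ) (X : Ω → α)
    (Y : Ω → β) {Z : Ω → γ} {Z' : Ω → γ'} {g : γ → γ'} (hg : Function.Injective g)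
    (hZ : ∀ ω, Z' ω = g (Z ω)) : cmiRV p X Y Z' = cmiRV p X Y Z :=
  cmi_congr p Function.injective_id Function.injective_id hg (fun _ => rfl) (fun _ => rfl) hZ

lemma sum_factor {κ : Type*} [Fintype κ] (A : ℝ) (k f : κ → ℝ)
    (hf : ∀ x, f x = A * k x) : ∑ x : κ, f x = A * ∑ x : κ, k x := by
  rw [Finset.mul_sum]
  exact Finset.sum_congr rfl fun x _ => hf x

lemma sum_factor_one {κ : Type*} [Fintype κ] (A : ℝ) (k f : κ → ℝ)
    (hf : ∀ x, f x = A * k x) (hk : ∑ x : κ, k x = 1) : ∑ x : κ, f x = A := by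
  rw [sum_factor A k f hf, hk, mul_one]

lemma sum_if_pull {κ : Type*} [Fintype κ] (c : Prop) [Decidable c] (F : κ → ℝ) :
    ∑ x : κ, (if c then F x else 0) = if c then ∑ x : κ, F x else 0 := by
  split <;> simp

end Derived

def SL.equivSplit {Q U0 U1 U2 V0 V1 V2 X1 X2 Y1 Y2 Zc : Type} :
    SL Q U0 U1 U2 V0 V1 V2 X1 X2 Y1 Y2 Zc ≃
      (Q × U0 × U1 × U2 × V0 × V1 × V2 × Zc) × (X1 × X2 × Y1 × Y2) where
  toFun s := ((s.q, s.u0, s.u1, s.u2, s.v0, s.v1, s.v2, s.z), (s.x1, s.x2, s.y1, s.y2))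
  invFun t := ⟨t.1.1, t.1.2.1, t.1.2.2.1, t.1.2.2.2.1, t.1.2.2.2.2.1, t.1.2.2.2.2.2.1,
    t.1.2.2.2.2.2.2.1, t.2.1, t.2.2.1, t.2.2.2.1, t.2.2.2.2, t.1.2.2.2.2.2.2.2⟩
  left_inv _ := rfl
  right_inv _ := rfl


/-- Remark 2: the constraint of Theorem 1 holds only if
`I(U1,V1; U2,V2 | Q,U0,V0,Z) = 0`. -/
theorem constraint_implies_conditional_independence
    {X1 X2 Y1 Y2 Zc : Type} [Fintype X1] [DecidableEq X1] [Fintype X2] [DecidableEq X2]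
    [Fintype Y1] [DecidableEq Y1] [Fintype Y2] [DecidableEq Y2] [Fintype Zc] [DecidableEq Zc]
    (ch : Channel2 X1 X2 Y1 Y2 Zc)
    {Q U0 U1 U2 V0 V1 V2 : Type} [Fintype Q] [DecidableEq Q] [Fintype U0] [DecidableEq U0]
    [Fintype U1] [DecidableEq U1] [Fintype U2] [DecidableEq U2] [Fintype V0] [DecidableEq V0]
    [Fintype V1] [DecidableEq V1] [Fintype V2] [DecidableEq V2]
    (pq : Q → ℝ) (pu0 : Q → U0 → ℝ) (pu12 : U0 → U1 × U2 → ℝ)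
    (pv0 : Q → V0 → ℝ) (pv12 : V0 → V1 × V2 → ℝ)
    (px1 : U0 × U1 × U2 → X1 → ℝ) (px2 : V0 × V1 × V2 → X2 → ℝ)
    (hpq : IsPMF pq) (hpu0 : IsKernel pu0) (hpu12 : IsKernel pu12)
    (hpv0 : IsKernel pv0) (hpv12 : IsKernel pv12)
    (hpx1 : IsKernel px1) (hpx2 : IsKernel px2)
    (p : SL Q U0 U1 U2 V0 V1 V2 X1 X2 Y1 Y2 Zc → ℝ)
    (hp : ∀ ω, p ω = pq ω.q * pu0 ω.q ω.u0 * pu12 ω.u0 (ω.u1, ω.u2) *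
      pv0 ω.q ω.v0 * pv12 ω.v0 (ω.v1, ω.v2) * px1 (ω.u0, ω.u1, ω.u2) ω.x1 *
      px2 (ω.v0, ω.v1, ω.v2) ω.x2 * ch.W ω.x1 ω.x2 ω.y1 ω.y2 ω.z)
    (hconstr : cmiRV p (fun ω => (ω.u1, ω.u2, ω.v1, ω.v2)) (fun ω => ω.z) (fun ω => (ω.u0, ω.v0)) ≤
      cmiRV p (fun ω => (ω.u1, ω.v1)) (fun ω => ω.z) (fun ω => (ω.u0, ω.v0)) +
      cmiRV p (fun ω => (ω.u2, ω.v2)) (fun ω => ω.z) (fun ω => (ω.u0, ω.v0)) -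
      cmiRV p (fun ω => ω.u1) (fun ω => ω.u2) (fun ω => ω.u0) -
      cmiRV p (fun ω => ω.v1) (fun ω => ω.v2) (fun ω => ω.v0))
    :
    cmiRV p (fun ω => (ω.u1, ω.v1)) (fun ω => (ω.u2, ω.v2))
      (fun ω => (ω.q, ω.u0, ω.v0, ω.z)) = 0 := by
  classical
  have hpnn : ∀ ω, 0 ≤ p ω := by
    intro ω
    rw [hp ω]
    have h1 := hpq.1 ω.q
    have h2 := (hpu0 ω.q).1 ω.u0
    have h3 := (hpu12 ω.u0).1 (ω.u1, ω.u2)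
    have h4 := (hpv0 ω.q).1 ω.v0
    have h5 := (hpv12 ω.v0).1 (ω.v1, ω.v2)
    have h6 := (hpx1 (ω.u0, ω.u1, ω.u2)).1 ω.x1
    have h7 := (hpx2 (ω.v0, ω.v1, ω.v2)).1 ω.x2
    have h8 := ch.nonneg ω.x1 ω.x2 ω.y1 ω.y2 ω.z
    exact mul_nonneg (mul_nonneg (mul_nonneg (mul_nonneg (mul_nonneg (mul_nonneg
      (mul_nonneg h1 h2) h3) h4) h5) h6) h7) h8
  have hsu0 : ∀ q', ∑ u0' : U0, pu0 q' u0' = 1 := fun q' => (hpu0 q').2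
  have hsv0 : ∀ q', ∑ v0' : V0, pv0 q' v0' = 1 := fun q' => (hpv0 q').2
  have hsu12 : ∀ u0', ∑ t : U1 × U2, pu12 u0' t = 1 := fun u0' => (hpu12 u0').2
  have hsv12 : ∀ v0', ∑ t : V1 × V2, pv12 v0' t = 1 := fun v0' => (hpv12 v0').2
  have hsu12c : ∀ u0', ∑ u2' : U2, ∑ u1' : U1, pu12 u0' (u1', u2') = 1 := by
    intro u0'
    rw [Finset.sum_comm, ← Fintype.sum_prod_type]
    exact hsu12 u0'
  have hsv12c : ∀ v0', ∑ v2' : V2, ∑ v1' : V1, pv12 v0' (v1', v2') = 1 := by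
    intro v0'
    rw [Finset.sum_comm, ← Fintype.sum_prod_type]
    exact hsv12 v0'
  have hsx1 : ∀ t, ∑ x1' : X1, px1 t x1' = 1 := fun t => (hpx1 t).2
  have hsx2 : ∀ t, ∑ x2' : X2, px2 t x2' = 1 := fun t => (hpx2 t).2
  have hsW : ∀ x1' x2', ∑ z' : Zc, ∑ y1' : Y1, ∑ y2' : Y2, ch.W x1' x2' y1' y2' z' = 1 := by
    intro x1' x2'
    calc ∑ z' : Zc, ∑ y1' : Y1, ∑ y2' : Y2, ch.W x1' x2' y1' y2' z'
        = ∑ y1' : Y1, ∑ z' : Zc, ∑ y2' : Y2, ch.W x1' x2' y1' y2' z' := Finset.sum_comm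
      _ = ∑ y1' : Y1, ∑ y2' : Y2, ∑ z' : Zc, ch.W x1' x2' y1' y2' z' :=
          Finset.sum_congr rfl fun _ _ => Finset.sum_comm
      _ = 1 := ch.sum_one x1' x2'
  have hWone : ∀ (x1' : X1) (x2' : X2) (C : ℝ),
      (∑ z' : Zc, ∑ y1' : Y1, ∑ y2' : Y2, C * ch.W x1' x2' y1' y2' z') = C := by
    intro x1' x2' C
    simp only [← Finset.mul_sum]
    rw [hsW x1' x2', mul_one]
  have hsfK : ∀ u0' u1' u2' v0' v1' v2',
      (∑ z' : Zc, ∑ x1' : X1, ∑ x2' : X2, ∑ y1' : Y1, ∑ y2' : Y2,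
        px1 (u0', u1', u2') x1' * px2 (v0', v1', v2') x2' * ch.W x1' x2' y1' y2' z') = 1 := by
    intro u0' u1' u2' v0' v1' v2'
    calc ∑ z' : Zc, ∑ x1' : X1, ∑ x2' : X2, ∑ y1' : Y1, ∑ y2' : Y2,
          px1 (u0', u1', u2') x1' * px2 (v0', v1', v2') x2' * ch.W x1' x2' y1' y2' z'
        = ∑ x1' : X1, ∑ z' : Zc, ∑ x2' : X2, ∑ y1' : Y1, ∑ y2' : Y2,
          px1 (u0', u1', u2') x1' * px2 (v0', v1', v2') x2' * ch.W x1' x2' y1' y2' z' :=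
          Finset.sum_comm
      _ = ∑ x1' : X1, ∑ x2' : X2, ∑ z' : Zc, ∑ y1' : Y1, ∑ y2' : Y2,
          px1 (u0', u1', u2') x1' * px2 (v0', v1', v2') x2' * ch.W x1' x2' y1' y2' z' :=
          Finset.sum_congr rfl fun _ _ => Finset.sum_comm
      _ = ∑ x1' : X1, ∑ x2' : X2, px1 (u0', u1', u2') x1' * px2 (v0', v1', v2') x2' := by
          apply Finset.sum_congr rfl; intro x1' _
          apply Finset.sum_congr rfl; intro x2' _
          exact hWone x1' x2' _
      _ = 1 := by
          simp only [← Finset.mul_sum]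
          rw [Finset.sum_congr rfl fun x1' _ => by rw [hsx2 (v0', v1', v2'), mul_one]]
          exact hsx1 (u0', u1', u2')
  have pm_oct : ∀ q' u0' u1' u2' v0' v1' v2' z',
      pm p (fun ω => (ω.q, ω.u0, ω.u1, ω.u2, ω.v0, ω.v1, ω.v2, ω.z))
        (q', u0', u1', u2', v0', v1', v2', z')
      = pq q' * pu0 q' u0' * pu12 u0' (u1', u2') * pv0 q' v0' * pv12 v0' (v1', v2') *
        (∑ x1' : X1, ∑ x2' : X2, ∑ y1' : Y1, ∑ y2' : Y2,
          px1 (u0', u1', u2') x1' * px2 (v0', v1', v2') x2' * ch.W x1' x2' y1' y2' z') := by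
    intro q' u0' u1' u2' v0' v1' v2' z'
    show (∑ ω, if (ω.q, ω.u0, ω.u1, ω.u2, ω.v0, ω.v1, ω.v2, ω.z)
        = (q', u0', u1', u2', v0', v1', v2', z') then p ω else 0) = _
    rw [← Equiv.sum_comp (SL.equivSplit
        (Q := Q) (U0 := U0) (U1 := U1) (U2 := U2) (V0 := V0) (V1 := V1) (V2 := V2)
        (X1 := X1) (X2 := X2) (Y1 := Y1) (Y2 := Y2) (Zc := Zc)).symm
      (fun ω => if (ω.q, ω.u0, ω.u1, ω.u2, ω.v0, ω.v1, ω.v2, ω.z)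
        = (q', u0', u1', u2', v0', v1', v2', z') then p ω else 0)]
    rw [Fintype.sum_prod_type]
    simp only [SL.equivSplit, Equiv.coe_fn_symm_mk, Prod.mk.eta]
    simp only [sum_if_pull]
    rw [Finset.sum_ite_eq' Finset.univ (q', u0', u1', u2', v0', v1', v2', z')
      (fun o => ∑ r : X1 × X2 × Y1 × Y2, p ⟨o.1, o.2.1, o.2.2.1, o.2.2.2.1, o.2.2.2.2.1,
        o.2.2.2.2.2.1, o.2.2.2.2.2.2.1, r.1, r.2.1, r.2.2.1, r.2.2.2,
        o.2.2.2.2.2.2.2⟩)]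
    rw [if_pos (Finset.mem_univ _)]
    rw [Fintype.sum_prod_type]
    simp only [Fintype.sum_prod_type, hp]
    simp only [Finset.mul_sum]
    apply Finset.sum_congr rfl; intro x1' _
    apply Finset.sum_congr rfl; intro x2' _
    apply Finset.sum_congr rfl; intro y1' _
    apply Finset.sum_congr rfl; intro y2' _
    ring
  have pm_sev : ∀ q' u0' u1' u2' v0' v1' v2',
      pm p (fun ω => (ω.q, ω.u0, ω.u1, ω.u2, ω.v0, ω.v1, ω.v2))
        (q', u0', u1', u2', v0', v1', v2')
      = pq q' * pu0 q' u0' * pu12 u0' (u1', u2') * pv0 q' v0' * pv12 v0' (v1', v2') := by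
    intro q' u0' u1' u2' v0' v1' v2'
    rw [pm_proj1pair p (fun ω => (ω.q, ω.u0, ω.u1, ω.u2, ω.v0, ω.v1, ω.v2))
      (fun ω => ω.z) (q', u0', u1', u2', v0', v1', v2')]
    have hcon : ∀ z' : Zc,
        pm p (fun ω => ((ω.q, ω.u0, ω.u1, ω.u2, ω.v0, ω.v1, ω.v2), ω.z))
          ((q', u0', u1', u2', v0', v1', v2'), z')
        = pm p (fun ω => (ω.q, ω.u0, ω.u1, ω.u2, ω.v0, ω.v1, ω.v2, ω.z))
          (q', u0', u1', u2', v0', v1', v2', z') := by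
      intro z'
      exact pm_congr p (fun ω => (ω.q, ω.u0, ω.u1, ω.u2, ω.v0, ω.v1, ω.v2, ω.z))
        (g := fun t : Q × U0 × U1 × U2 × V0 × V1 × V2 × Zc =>
          ((t.1, t.2.1, t.2.2.1, t.2.2.2.1, t.2.2.2.2.1, t.2.2.2.2.2.1, t.2.2.2.2.2.2.1),
            t.2.2.2.2.2.2.2))
        (by intro x y hxy; simp only [Prod.ext_iff] at hxy ⊢; tauto)
        (q', u0', u1', u2', v0', v1', v2', z')
    rw [Finset.sum_congr rfl fun z' _ => (hcon z').trans (pm_oct q' u0' u1' u2' v0' v1' v2' z')]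
    exact sum_factor_one _ _ _ (fun z' => rfl) (hsfK u0' u1' u2' v0' v1' v2')
  -- Master 2 : I((U1,U2); (V0,(Q,(V1,V2))) | U0) = 0
  have hP3M2 : ∀ (a' : U1 × U2) (v0' : V0) (q' : Q) (w : V1 × V2) (u0' : U0),
      pm p (fun ω => ((ω.u1, ω.u2), (ω.v0, (ω.q, (ω.v1, ω.v2))), ω.u0))
        (a', (v0', (q', w)), u0')
      = pq q' * pu0 q' u0' * pu12 u0' a' * pv0 q' v0' * pv12 v0' w := by
    rintro ⟨u1', u2'⟩ v0' q' ⟨v1', v2'⟩ u0'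
    exact (pm_congr p (fun ω => (ω.q, ω.u0, ω.u1, ω.u2, ω.v0, ω.v1, ω.v2))
      (g := fun t : Q × U0 × U1 × U2 × V0 × V1 × V2 =>
        ((t.2.2.1, t.2.2.2.1), (t.2.2.2.2.1, (t.1, (t.2.2.2.2.2.1, t.2.2.2.2.2.2))), t.2.1))
      (by intro x y hxy; simp only [Prod.ext_iff] at hxy ⊢; tauto)
      (q', u0', u1', u2', v0', v1', v2')).trans (pm_sev q' u0' u1' u2' v0' v1' v2')
  have hPXM2 : ∀ (a' : U1 × U2) (u0' : U0),
      (∑ b' : V0 × Q × V1 × V2,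
        pm p (fun ω => ((ω.u1, ω.u2), (ω.v0, (ω.q, (ω.v1, ω.v2))), ω.u0)) (a', b', u0'))
      = pu12 u0' a' * ∑ q'' : Q, pq q'' * pu0 q'' u0' := by
    intro a' u0'
    rw [Fintype.sum_prod_type]
    calc ∑ v0'' : V0, ∑ s : Q × V1 × V2,
          pm p (fun ω => ((ω.u1, ω.u2), (ω.v0, (ω.q, (ω.v1, ω.v2))), ω.u0)) (a', (v0'', s), u0')
        = ∑ v0'' : V0, ∑ q'' : Q, ∑ w : V1 × V2,
          pm p (fun ω => ((ω.u1, ω.u2), (ω.v0, (ω.q, (ω.v1, ω.v2))), ω.u0))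
            (a', (v0'', (q'', w)), u0') :=
          Finset.sum_congr rfl fun v0'' _ => by rw [Fintype.sum_prod_type]
      _ = ∑ v0'' : V0, ∑ q'' : Q,
          pq q'' * pu0 q'' u0' * pu12 u0' a' * pv0 q'' v0'' := by
          apply Finset.sum_congr rfl; intro v0'' _
          apply Finset.sum_congr rfl; intro q'' _
          exact sum_factor_one _ _ _ (fun w => by rw [hP3M2 a' v0'' q'' w u0']) (hsv12 v0'')
      _ = ∑ q'' : Q, ∑ v0'' : V0,
          pq q'' * pu0 q'' u0' * pu12 u0' a' * pv0 q'' v0'' := Finset.sum_comm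
      _ = ∑ q'' : Q, pq q'' * pu0 q'' u0' * pu12 u0' a' := by
          apply Finset.sum_congr rfl; intro q'' _
          exact sum_factor_one _ _ _ (fun v0'' => rfl) (hsv0 q'')
      _ = pu12 u0' a' * ∑ q'' : Q, pq q'' * pu0 q'' u0' :=
          sum_factor _ _ _ (fun q'' => by ring)
  have M2 : cmiRV p (fun ω => (ω.u1, ω.u2)) (fun ω => (ω.v0, (ω.q, (ω.v1, ω.v2))))
      (fun ω => ω.u0) = 0 := by
    apply cmi_eq_zero_of_fac hpnn
    intro a b c
    obtain ⟨v0', q', w⟩ := b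
    have hPY : (∑ a'' : U1 × U2,
        pm p (fun ω => ((ω.u1, ω.u2), (ω.v0, (ω.q, (ω.v1, ω.v2))), ω.u0))
          (a'', (v0', (q', w)), c))
        = pq q' * pu0 q' c * pv0 q' v0' * pv12 v0' w :=
      sum_factor_one _ _ _ (fun a'' => by rw [hP3M2 a'' v0' q' w c]; ring) (hsu12 c)
    have hPZ : (∑ a'' : U1 × U2, ∑ b'' : V0 × Q × V1 × V2,
        pm p (fun ω => ((ω.u1, ω.u2), (ω.v0, (ω.q, (ω.v1, ω.v2))), ω.u0)) (a'', b'', c))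
        = ∑ q'' : Q, pq q'' * pu0 q'' c :=
      sum_factor_one _ _ _ (fun a'' => by rw [hPXM2 a'' c]; ring) (hsu12 c)
    rw [hP3M2 a v0' q' w c, hPXM2 a c, hPY, hPZ]
    ring
  -- Master 3 : I((V1,V2); (U0,(Q,(U1,U2))) | V0) = 0
  have hP3M3 : ∀ (a' : V1 × V2) (u0' : U0) (q' : Q) (w : U1 × U2) (v0' : V0),
      pm p (fun ω => ((ω.v1, ω.v2), (ω.u0, (ω.q, (ω.u1, ω.u2))), ω.v0))
        (a', (u0', (q', w)), v0')
      = pq q' * pu0 q' u0' * pu12 u0' w * pv0 q' v0' * pv12 v0' a' := by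
    rintro ⟨v1', v2'⟩ u0' q' ⟨u1', u2'⟩ v0'
    exact (pm_congr p (fun ω => (ω.q, ω.u0, ω.u1, ω.u2, ω.v0, ω.v1, ω.v2))
      (g := fun t : Q × U0 × U1 × U2 × V0 × V1 × V2 =>
        ((t.2.2.2.2.2.1, t.2.2.2.2.2.2), (t.2.1, (t.1, (t.2.2.1, t.2.2.2.1))), t.2.2.2.2.1))
      (by intro x y hxy; simp only [Prod.ext_iff] at hxy ⊢; tauto)
      (q', u0', u1', u2', v0', v1', v2')).trans (pm_sev q' u0' u1' u2' v0' v1' v2')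
  have hPXM3 : ∀ (a' : V1 × V2) (v0' : V0),
      (∑ b' : U0 × Q × U1 × U2,
        pm p (fun ω => ((ω.v1, ω.v2), (ω.u0, (ω.q, (ω.u1, ω.u2))), ω.v0)) (a', b', v0'))
      = pv12 v0' a' * ∑ q'' : Q, pq q'' * pv0 q'' v0' := by
    intro a' v0'
    rw [Fintype.sum_prod_type]
    calc ∑ u0'' : U0, ∑ s : Q × U1 × U2,
          pm p (fun ω => ((ω.v1, ω.v2), (ω.u0, (ω.q, (ω.u1, ω.u2))), ω.v0)) (a', (u0'', s), v0')
        = ∑ u0'' : U0, ∑ q'' : Q, ∑ w : U1 × U2,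
          pm p (fun ω => ((ω.v1, ω.v2), (ω.u0, (ω.q, (ω.u1, ω.u2))), ω.v0))
            (a', (u0'', (q'', w)), v0') :=
          Finset.sum_congr rfl fun u0'' _ => by rw [Fintype.sum_prod_type]
      _ = ∑ u0'' : U0, ∑ q'' : Q,
          pq q'' * pu0 q'' u0'' * pv0 q'' v0' * pv12 v0' a' := by
          apply Finset.sum_congr rfl; intro u0'' _
          apply Finset.sum_congr rfl; intro q'' _
          exact sum_factor_one _ _ _
            (fun w => by rw [hP3M3 a' u0'' q'' w v0']; ring) (hsu12 u0'')
      _ = ∑ q'' : Q, ∑ u0'' : U0,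
          pq q'' * pu0 q'' u0'' * pv0 q'' v0' * pv12 v0' a' := Finset.sum_comm
      _ = ∑ q'' : Q, pq q'' * pv0 q'' v0' * pv12 v0' a' := by
          apply Finset.sum_congr rfl; intro q'' _
          exact sum_factor_one _ _ _ (fun u0'' => by ring) (hsu0 q'')
      _ = pv12 v0' a' * ∑ q'' : Q, pq q'' * pv0 q'' v0' :=
          sum_factor _ _ _ (fun q'' => by ring)
  have M3 : cmiRV p (fun ω => (ω.v1, ω.v2)) (fun ω => (ω.u0, (ω.q, (ω.u1, ω.u2))))
      (fun ω => ω.v0) = 0 := by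
    apply cmi_eq_zero_of_fac hpnn
    intro a b c
    obtain ⟨u0', q', w⟩ := b
    have hPY : (∑ a'' : V1 × V2,
        pm p (fun ω => ((ω.v1, ω.v2), (ω.u0, (ω.q, (ω.u1, ω.u2))), ω.v0))
          (a'', (u0', (q', w)), c))
        = pq q' * pu0 q' u0' * pu12 u0' w * pv0 q' c :=
      sum_factor_one _ _ _ (fun a'' => by rw [hP3M3 a'' u0' q' w c]) (hsv12 c)
    have hPZ : (∑ a'' : V1 × V2, ∑ b'' : U0 × Q × U1 × U2,
        pm p (fun ω => ((ω.v1, ω.v2), (ω.u0, (ω.q, (ω.u1, ω.u2))), ω.v0)) (a'', b'', c))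
        = ∑ q'' : Q, pq q'' * pv0 q'' c :=
      sum_factor_one _ _ _ (fun a'' => by rw [hPXM3 a'' c]; ring) (hsv12 c)
    rw [hP3M3 a u0' q' w c, hPXM3 a c, hPY, hPZ]
    ring
  -- Master 1 : I(Q ; (((U2,V2),Z),(U1,V1)) | (U0,V0)) = 0
  have hP3M1 : ∀ (q' : Q) (u2' : U2) (v2' : V2) (z' : Zc) (u1' : U1) (v1' : V1)
      (u0' : U0) (v0' : V0),
      pm p (fun ω => (ω.q, (((ω.u2, ω.v2), ω.z), (ω.u1, ω.v1)), (ω.u0, ω.v0)))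
        (q', (((u2', v2'), z'), (u1', v1')), (u0', v0'))
      = pq q' * pu0 q' u0' * pu12 u0' (u1', u2') * pv0 q' v0' * pv12 v0' (v1', v2') *
        (∑ x1' : X1, ∑ x2' : X2, ∑ y1' : Y1, ∑ y2' : Y2,
          px1 (u0', u1', u2') x1' * px2 (v0', v1', v2') x2' * ch.W x1' x2' y1' y2' z') := by
    intro q' u2' v2' z' u1' v1' u0' v0'
    exact (pm_congr p (fun ω => (ω.q, ω.u0, ω.u1, ω.u2, ω.v0, ω.v1, ω.v2, ω.z))
      (g := fun t : Q × U0 × U1 × U2 × V0 × V1 × V2 × Zc =>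
        (t.1, (((t.2.2.2.1, t.2.2.2.2.2.2.1), t.2.2.2.2.2.2.2), (t.2.2.1, t.2.2.2.2.2.1)),
          (t.2.1, t.2.2.2.2.1)))
      (by intro x y hxy; simp only [Prod.ext_iff] at hxy ⊢; tauto)
      (q', u0', u1', u2', v0', v1', v2', z')).trans (pm_oct q' u0' u1' u2' v0' v1' v2' z')
  have hPXM1 : ∀ (q' : Q) (u0' : U0) (v0' : V0),
      (∑ b' : ((U2 × V2) × Zc) × (U1 × V1),
        pm p (fun ω => (ω.q, (((ω.u2, ω.v2), ω.z), (ω.u1, ω.v1)), (ω.u0, ω.v0)))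
          (q', b', (u0', v0')))
      = pq q' * pu0 q' u0' * pv0 q' v0' := by
    intro q' u0' v0'
    calc (∑ b' : ((U2 × V2) × Zc) × (U1 × V1),
          pm p (fun ω => (ω.q, (((ω.u2, ω.v2), ω.z), (ω.u1, ω.v1)), (ω.u0, ω.v0)))
            (q', b', (u0', v0')))
        = ∑ s : (U2 × V2) × Zc, ∑ t : U1 × V1,
          pm p (fun ω => (ω.q, (((ω.u2, ω.v2), ω.z), (ω.u1, ω.v1)), (ω.u0, ω.v0)))
            (q', (s, t), (u0', v0')) := by rw [Fintype.sum_prod_type]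
      _ = ∑ uv : U2 × V2, ∑ z' : Zc, ∑ t : U1 × V1,
          pm p (fun ω => (ω.q, (((ω.u2, ω.v2), ω.z), (ω.u1, ω.v1)), (ω.u0, ω.v0)))
            (q', ((uv, z'), t), (u0', v0')) := by rw [Fintype.sum_prod_type]
      _ = ∑ u2' : U2, ∑ v2' : V2, ∑ z' : Zc, ∑ t : U1 × V1,
          pm p (fun ω => (ω.q, (((ω.u2, ω.v2), ω.z), (ω.u1, ω.v1)), (ω.u0, ω.v0)))
            (q', (((u2', v2'), z'), t), (u0', v0')) := by rw [Fintype.sum_prod_type]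
      _ = ∑ u2' : U2, ∑ v2' : V2, ∑ z' : Zc, ∑ u1' : U1, ∑ v1' : V1,
          pm p (fun ω => (ω.q, (((ω.u2, ω.v2), ω.z), (ω.u1, ω.v1)), (ω.u0, ω.v0)))
            (q', (((u2', v2'), z'), (u1', v1')), (u0', v0')) := by
          apply Finset.sum_congr rfl; intro u2' _
          apply Finset.sum_congr rfl; intro v2' _
          apply Finset.sum_congr rfl; intro z' _
          rw [Fintype.sum_prod_type]
      _ = ∑ u2' : U2, ∑ v2' : V2, ∑ z' : Zc, ∑ u1' : U1, ∑ v1' : V1,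
          pq q' * pu0 q' u0' * pu12 u0' (u1', u2') * pv0 q' v0' * pv12 v0' (v1', v2') *
          (∑ x1' : X1, ∑ x2' : X2, ∑ y1' : Y1, ∑ y2' : Y2,
            px1 (u0', u1', u2') x1' * px2 (v0', v1', v2') x2' * ch.W x1' x2' y1' y2' z') := by
          apply Finset.sum_congr rfl; intro u2' _
          apply Finset.sum_congr rfl; intro v2' _
          apply Finset.sum_congr rfl; intro z' _
          apply Finset.sum_congr rfl; intro u1' _
          apply Finset.sum_congr rfl; intro v1' _
          exact hP3M1 q' u2' v2' z' u1' v1' u0' v0'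
      _ = ∑ u2' : U2, ∑ v2' : V2, ∑ u1' : U1, ∑ z' : Zc, ∑ v1' : V1,
          pq q' * pu0 q' u0' * pu12 u0' (u1', u2') * pv0 q' v0' * pv12 v0' (v1', v2') *
          (∑ x1' : X1, ∑ x2' : X2, ∑ y1' : Y1, ∑ y2' : Y2,
            px1 (u0', u1', u2') x1' * px2 (v0', v1', v2') x2' * ch.W x1' x2' y1' y2' z') := by
          apply Finset.sum_congr rfl; intro u2' _
          apply Finset.sum_congr rfl; intro v2' _
          exact Finset.sum_comm
      _ = ∑ u2' : U2, ∑ v2' : V2, ∑ u1' : U1, ∑ v1' : V1, ∑ z' : Zc,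
          pq q' * pu0 q' u0' * pu12 u0' (u1', u2') * pv0 q' v0' * pv12 v0' (v1', v2') *
          (∑ x1' : X1, ∑ x2' : X2, ∑ y1' : Y1, ∑ y2' : Y2,
            px1 (u0', u1', u2') x1' * px2 (v0', v1', v2') x2' * ch.W x1' x2' y1' y2' z') := by
          apply Finset.sum_congr rfl; intro u2' _
          apply Finset.sum_congr rfl; intro v2' _
          apply Finset.sum_congr rfl; intro u1' _
          exact Finset.sum_comm
      _ = ∑ u2' : U2, ∑ v2' : V2, ∑ u1' : U1, ∑ v1' : V1,
          pq q' * pu0 q' u0' * pu12 u0' (u1', u2') * pv0 q' v0' * pv12 v0' (v1', v2') := by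
          apply Finset.sum_congr rfl; intro u2' _
          apply Finset.sum_congr rfl; intro v2' _
          apply Finset.sum_congr rfl; intro u1' _
          apply Finset.sum_congr rfl; intro v1' _
          have hz : (∑ z' : Zc, ∑ x1' : X1, ∑ x2' : X2, ∑ y1' : Y1, ∑ y2' : Y2,
              px1 (u0', u1', u2') x1' * px2 (v0', v1', v2') x2' * ch.W x1' x2' y1' y2' z') = 1 :=
            hsfK u0' u1' u2' v0' v1' v2'
          rw [← Finset.mul_sum, hz, mul_one]
      _ = ∑ u2' : U2, ∑ v2' : V2,
          (pq q' * pu0 q' u0' * pv0 q' v0' * (∑ v1' : V1, pv12 v0' (v1', v2'))) *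
            (∑ u1' : U1, pu12 u0' (u1', u2')) := by
          apply Finset.sum_congr rfl; intro u2' _
          apply Finset.sum_congr rfl; intro v2' _
          calc ∑ u1' : U1, ∑ v1' : V1,
                pq q' * pu0 q' u0' * pu12 u0' (u1', u2') * pv0 q' v0' * pv12 v0' (v1', v2')
              = ∑ u1' : U1,
                (pq q' * pu0 q' u0' * pu12 u0' (u1', u2') * pv0 q' v0') *
                  (∑ v1' : V1, pv12 v0' (v1', v2')) :=
                Finset.sum_congr rfl fun u1' _ => sum_factor _ _ _ (fun v1' => rfl)
            _ = (pq q' * pu0 q' u0' * pv0 q' v0' * (∑ v1' : V1, pv12 v0' (v1', v2'))) *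
                  (∑ u1' : U1, pu12 u0' (u1', u2')) :=
                sum_factor _ _ _ (fun u1' => by ring)
      _ = ∑ u2' : U2,
          (pq q' * pu0 q' u0' * pv0 q' v0') * (∑ u1' : U1, pu12 u0' (u1', u2')) := by
          apply Finset.sum_congr rfl; intro u2' _
          exact sum_factor_one _ _ _ (fun v2' => by ring) (hsv12c v0')
      _ = pq q' * pu0 q' u0' * pv0 q' v0' :=
          sum_factor_one _ _ _ (fun u2' => by ring) (hsu12c u0')
  have M1 : cmiRV p (fun ω => ω.q) (fun ω => (((ω.u2, ω.v2), ω.z), (ω.u1, ω.v1)))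
      (fun ω => (ω.u0, ω.v0)) = 0 := by
    apply cmi_eq_zero_of_fac hpnn
    intro a b c
    obtain ⟨⟨⟨u2', v2'⟩, z'⟩, ⟨u1', v1'⟩⟩ := b
    obtain ⟨u0', v0'⟩ := c
    have hPY : (∑ a'' : Q,
        pm p (fun ω => (ω.q, (((ω.u2, ω.v2), ω.z), (ω.u1, ω.v1)), (ω.u0, ω.v0)))
          (a'', (((u2', v2'), z'), (u1', v1')), (u0', v0')))
        = (pu12 u0' (u1', u2') * pv12 v0' (v1', v2') *
            (∑ x1' : X1, ∑ x2' : X2, ∑ y1' : Y1, ∑ y2' : Y2,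
              px1 (u0', u1', u2') x1' * px2 (v0', v1', v2') x2' * ch.W x1' x2' y1' y2' z')) *
          (∑ q'' : Q, pq q'' * pu0 q'' u0' * pv0 q'' v0') :=
      sum_factor _ _ _ (fun a'' => by rw [hP3M1 a'' u2' v2' z' u1' v1' u0' v0']; ring)
    have hPZ : (∑ a'' : Q, ∑ b'' : ((U2 × V2) × Zc) × (U1 × V1),
        pm p (fun ω => (ω.q, (((ω.u2, ω.v2), ω.z), (ω.u1, ω.v1)), (ω.u0, ω.v0)))
          (a'', b'', (u0', v0')))
        = ∑ q'' : Q, pq q'' * pu0 q'' u0' * pv0 q'' v0' :=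
      Finset.sum_congr rfl fun q'' _ => hPXM1 q'' u0' v0'
    rw [hP3M1 a u2' v2' z' u1' v1' u0' v0', hPXM1 a u0' v0', hPY, hPZ]
    ring
  -- injectivity discharge for swaps etc is done inline
  -- Derived zero facts from M2
  have d1 : cmiRV p (fun ω => (ω.v0, (ω.q, (ω.v1, ω.v2)))) (fun ω => (ω.u1, ω.u2))
      (fun ω => ω.u0) = 0 := by rw [cmi_symm]; exact M2
  have d1s : cmiRV p (fun ω => (ω.v0, (ω.q, (ω.v1, ω.v2)))) (fun ω => (ω.u2, ω.u1))
      (fun ω => ω.u0) = 0 :=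
    (cmi_congrY p _ _ (Y := fun ω => (ω.u1, ω.u2)) (g := fun t : U1 × U2 => (t.2, t.1))
      (by intro x y hxy; simp only [Prod.ext_iff] at hxy ⊢; tauto)
      (fun ω => rfl)).trans d1
  have d2 : cmiRV p (fun ω => (ω.v0, (ω.q, (ω.v1, ω.v2)))) (fun ω => ω.u2)
      (fun ω => (ω.u1, ω.u0)) = 0 := cmi_move hpnn d1
  have d3 : cmiRV p (fun ω => ω.u2) (fun ω => (ω.v0, (ω.q, (ω.v1, ω.v2))))
      (fun ω => (ω.u1, ω.u0)) = 0 := by rw [cmi_symm]; exact d2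
  have Z2 : cmiRV p (fun ω => ω.u2) (fun ω => ω.v0) (fun ω => (ω.u1, ω.u0)) = 0 :=
    cmi_drop hpnn d3
  have d4 : cmiRV p (fun ω => (ω.v0, (ω.q, (ω.v1, ω.v2)))) (fun ω => ω.u2)
      (fun ω => ω.u0) = 0 := cmi_drop hpnn d1s
  have d5 : cmiRV p (fun ω => ω.u2) (fun ω => (ω.v0, (ω.q, (ω.v1, ω.v2))))
      (fun ω => ω.u0) = 0 := by rw [cmi_symm]; exact d4
  have Z1 : cmiRV p (fun ω => ω.u2) (fun ω => ω.v0) (fun ω => ω.u0) = 0 :=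
    cmi_drop hpnn d5
  have d6 : cmiRV p (fun ω => ω.u2) (fun ω => (ω.q, (ω.v1, ω.v2)))
      (fun ω => (ω.v0, (ω.u1, ω.u0))) = 0 := cmi_move hpnn d3
  have d6y : cmiRV p (fun ω => ω.u2) (fun ω => ((ω.v1, ω.v2), ω.q))
      (fun ω => (ω.v0, (ω.u1, ω.u0))) = 0 :=
    (cmi_congrY p _ _ (Y := fun ω => (ω.q, (ω.v1, ω.v2))) (g := fun t : Q × (V1 × V2) => (t.2, t.1))
      (by intro x y hxy; simp only [Prod.ext_iff] at hxy ⊢; tauto)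
      (fun ω => rfl)).trans d6
  have d7 : cmiRV p (fun ω => ω.u2) (fun ω => (ω.v1, ω.v2))
      (fun ω => (ω.v0, (ω.u1, ω.u0))) = 0 := cmi_drop hpnn d6y
  have d8 : cmiRV p (fun ω => ω.u2) (fun ω => ω.v1)
      (fun ω => (ω.v0, (ω.u1, ω.u0))) = 0 := cmi_drop hpnn d7
  have Zf1 : cmiRV p (fun ω => ω.u2) (fun ω => ω.v1)
      (fun ω => (ω.u1, (ω.u0, ω.v0))) = 0 :=
    (cmi_congrZ p _ _ (Z := fun ω => (ω.v0, (ω.u1, ω.u0))) (g := fun t : V0 × (U1 × U0) => (t.2.1, (t.2.2, t.1)))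
      (by intro x y hxy; simp only [Prod.ext_iff] at hxy ⊢; tauto)
      (fun ω => rfl)).trans d8
  have e1 : cmiRV p (fun ω => (ω.v0, (ω.q, (ω.v1, ω.v2)))) (fun ω => ω.u1)
      (fun ω => (ω.u2, ω.u0)) = 0 := cmi_move hpnn d1s
  have e2 : cmiRV p (fun ω => ω.u1) (fun ω => (ω.v0, (ω.q, (ω.v1, ω.v2))))
      (fun ω => (ω.u2, ω.u0)) = 0 := by rw [cmi_symm]; exact e1
  have e3 : cmiRV p (fun ω => ω.u1) (fun ω => (ω.q, (ω.v1, ω.v2)))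
      (fun ω => (ω.v0, (ω.u2, ω.u0))) = 0 := cmi_move hpnn e2
  have e4 : cmiRV p (fun ω => ω.u1) (fun ω => ((ω.v1, ω.v2), ω.q))
      (fun ω => (ω.v0, (ω.u2, ω.u0))) = 0 :=
    (cmi_congrY p _ _ (Y := fun ω => (ω.q, (ω.v1, ω.v2))) (g := fun t : Q × (V1 × V2) => (t.2, t.1))
      (by intro x y hxy; simp only [Prod.ext_iff] at hxy ⊢; tauto)
      (fun ω => rfl)).trans e3
  have e5 : cmiRV p (fun ω => ω.u1) (fun ω => (ω.v1, ω.v2))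
      (fun ω => (ω.v0, (ω.u2, ω.u0))) = 0 := cmi_drop hpnn e4
  have e6 : cmiRV p (fun ω => ω.u1) (fun ω => (ω.v2, ω.v1))
      (fun ω => (ω.v0, (ω.u2, ω.u0))) = 0 :=
    (cmi_congrY p _ _ (Y := fun ω => (ω.v1, ω.v2)) (g := fun t : V1 × V2 => (t.2, t.1))
      (by intro x y hxy; simp only [Prod.ext_iff] at hxy ⊢; tauto)
      (fun ω => rfl)).trans e5
  have e7 : cmiRV p (fun ω => ω.u1) (fun ω => ω.v2)
      (fun ω => (ω.v0, (ω.u2, ω.u0))) = 0 := cmi_drop hpnn e6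
  have e8 : cmiRV p (fun ω => ω.v2) (fun ω => ω.u1)
      (fun ω => (ω.v0, (ω.u2, ω.u0))) = 0 := by rw [cmi_symm]; exact e7
  have Zf2 : cmiRV p (fun ω => ω.v2) (fun ω => ω.u1)
      (fun ω => (ω.u2, (ω.u0, ω.v0))) = 0 :=
    (cmi_congrZ p _ _ (Z := fun ω => (ω.v0, (ω.u2, ω.u0))) (g := fun t : V0 × (U2 × U0) => (t.2.1, (t.2.2, t.1)))
      (by intro x y hxy; simp only [Prod.ext_iff] at hxy ⊢; tauto)
      (fun ω => rfl)).trans e8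
  -- Derived zero facts from M3
  have f1 : cmiRV p (fun ω => (ω.u0, (ω.q, (ω.u1, ω.u2)))) (fun ω => (ω.v1, ω.v2))
      (fun ω => ω.v0) = 0 := by rw [cmi_symm]; exact M3
  have f2 : cmiRV p (fun ω => (ω.u0, (ω.q, (ω.u1, ω.u2)))) (fun ω => (ω.v2, ω.v1))
      (fun ω => ω.v0) = 0 :=
    (cmi_congrY p _ _ (Y := fun ω => (ω.v1, ω.v2)) (g := fun t : V1 × V2 => (t.2, t.1))
      (by intro x y hxy; simp only [Prod.ext_iff] at hxy ⊢; tauto)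
      (fun ω => rfl)).trans f1
  have f3 : cmiRV p (fun ω => (ω.u0, (ω.q, (ω.u1, ω.u2)))) (fun ω => ω.v2)
      (fun ω => ω.v0) = 0 := cmi_drop hpnn f2
  have f4 : cmiRV p (fun ω => ω.v2) (fun ω => (ω.u0, (ω.q, (ω.u1, ω.u2))))
      (fun ω => ω.v0) = 0 := by rw [cmi_symm]; exact f3
  have f5 : cmiRV p (fun ω => ω.v2) (fun ω => ((ω.u1, (ω.u2, ω.u0)), ω.q))
      (fun ω => ω.v0) = 0 :=
    (cmi_congrY p _ _ (Y := fun ω => (ω.u0, (ω.q, (ω.u1, ω.u2)))) (g := fun t : U0 × (Q × (U1 × U2)) => ((t.2.2.1, (t.2.2.2, t.1)), t.2.1))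
      (by intro x y hxy; simp only [Prod.ext_iff] at hxy ⊢; tauto)
      (fun ω => rfl)).trans f4
  have Z3 : cmiRV p (fun ω => ω.v2) (fun ω => (ω.u1, (ω.u2, ω.u0)))
      (fun ω => ω.v0) = 0 := cmi_drop hpnn f5
  have f6 : cmiRV p (fun ω => (ω.u0, (ω.q, (ω.u1, ω.u2)))) (fun ω => ω.v2)
      (fun ω => (ω.v1, ω.v0)) = 0 := cmi_move hpnn f1
  have f7 : cmiRV p (fun ω => ω.v2) (fun ω => (ω.u0, (ω.q, (ω.u1, ω.u2))))
      (fun ω => (ω.v1, ω.v0)) = 0 := by rw [cmi_symm]; exact f6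
  have f8 : cmiRV p (fun ω => ω.v2) (fun ω => ((ω.u1, (ω.u2, ω.u0)), ω.q))
      (fun ω => (ω.v1, ω.v0)) = 0 :=
    (cmi_congrY p _ _ (Y := fun ω => (ω.u0, (ω.q, (ω.u1, ω.u2)))) (g := fun t : U0 × (Q × (U1 × U2)) => ((t.2.2.1, (t.2.2.2, t.1)), t.2.1))
      (by intro x y hxy; simp only [Prod.ext_iff] at hxy ⊢; tauto)
      (fun ω => rfl)).trans f7
  have Z4 : cmiRV p (fun ω => ω.v2) (fun ω => (ω.u1, (ω.u2, ω.u0)))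
      (fun ω => (ω.v1, ω.v0)) = 0 := cmi_drop hpnn f8
  -- Derived zero fact from M1
  have g1 : cmiRV p (fun ω => ω.q) (fun ω => (ω.u1, ω.v1))
      (fun ω => (((ω.u2, ω.v2), ω.z), (ω.u0, ω.v0))) = 0 := cmi_move hpnn M1
  have g2 : cmiRV p (fun ω => (ω.u1, ω.v1)) (fun ω => ω.q)
      (fun ω => (((ω.u2, ω.v2), ω.z), (ω.u0, ω.v0))) = 0 := by rw [cmi_symm]; exact g1
  have F1 : cmiRV p (fun ω => (ω.u1, ω.v1)) (fun ω => ω.q)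
      (fun ω => ((ω.u2, ω.v2), ((ω.u0, ω.v0), ω.z))) = 0 :=
    (cmi_congrZ p _ _ (Z := fun ω => (((ω.u2, ω.v2), ω.z), (ω.u0, ω.v0))) (g := fun t : ((U2 × V2) × Zc) × (U0 × V0) => (t.1.1, (t.2, t.1.2)))
      (by intro x y hxy; simp only [Prod.ext_iff] at hxy ⊢; tauto)
      (fun ω => rfl)).trans g2
  -- Assembly
  have hq0 : 0 ≤ cmiRV p (fun ω => (ω.u1, ω.v1)) (fun ω => ω.q)
      (fun ω => ((ω.u0, ω.v0), ω.z)) := cmi_nonneg hpnn _ _ _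
  have c1 := cmi_chain p (fun ω => (ω.u1, ω.v1)) (fun ω => ω.q) (fun ω => (ω.u2, ω.v2))
    (fun ω => ((ω.u0, ω.v0), ω.z))
  have c2 := cmi_chain p (fun ω => (ω.u1, ω.v1)) (fun ω => (ω.u2, ω.v2)) (fun ω => ω.q)
    (fun ω => ((ω.u0, ω.v0), ω.z))
  have c3 : cmiRV p (fun ω => (ω.u1, ω.v1)) (fun ω => (ω.q, (ω.u2, ω.v2)))
      (fun ω => ((ω.u0, ω.v0), ω.z))
      = cmiRV p (fun ω => (ω.u1, ω.v1)) (fun ω => ((ω.u2, ω.v2), ω.q))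
        (fun ω => ((ω.u0, ω.v0), ω.z)) :=
    cmi_congrY p _ _ (Y := fun ω => ((ω.u2, ω.v2), ω.q))
      (g := fun t : (U2 × V2) × Q => (t.2, t.1))
      (by intro x y hxy; simp only [Prod.ext_iff] at hxy ⊢; tauto) (fun ω => rfl)
  have hgoal : cmiRV p (fun ω => (ω.u1, ω.v1)) (fun ω => (ω.u2, ω.v2))
      (fun ω => (ω.q, ω.u0, ω.v0, ω.z))
      = cmiRV p (fun ω => (ω.u1, ω.v1)) (fun ω => (ω.u2, ω.v2))
        (fun ω => (ω.q, ((ω.u0, ω.v0), ω.z))) :=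
    cmi_congrZ p _ _ (Z := fun ω => (ω.q, ((ω.u0, ω.v0), ω.z)))
      (g := fun t : Q × ((U0 × V0) × Zc) => (t.1, t.2.1.1, t.2.1.2, t.2.2))
      (by intro x y hxy; simp only [Prod.ext_iff] at hxy ⊢; tauto) (fun ω => rfl)
  have step1 : cmiRV p (fun ω => (ω.u1, ω.v1)) (fun ω => (ω.u2, ω.v2))
      (fun ω => (ω.q, ω.u0, ω.v0, ω.z))
      ≤ cmiRV p (fun ω => (ω.u1, ω.v1)) (fun ω => (ω.u2, ω.v2))
        (fun ω => ((ω.u0, ω.v0), ω.z)) := by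
    rw [hgoal]
    linarith [c1, c2, c3, F1, hq0]
  have c4 := cmi_chain p (fun ω => (ω.u1, ω.v1)) (fun ω => (ω.u2, ω.v2)) (fun ω => ω.z)
    (fun ω => (ω.u0, ω.v0))
  have c5 := cmi_chain p (fun ω => (ω.u1, ω.v1)) (fun ω => ω.z) (fun ω => (ω.u2, ω.v2))
    (fun ω => (ω.u0, ω.v0))
  have c6 : cmiRV p (fun ω => (ω.u1, ω.v1)) (fun ω => (ω.z, (ω.u2, ω.v2)))
      (fun ω => (ω.u0, ω.v0))
      = cmiRV p (fun ω => (ω.u1, ω.v1)) (fun ω => ((ω.u2, ω.v2), ω.z))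
        (fun ω => (ω.u0, ω.v0)) :=
    cmi_congrY p _ _ (Y := fun ω => ((ω.u2, ω.v2), ω.z))
      (g := fun t : (U2 × V2) × Zc => (t.2, t.1))
      (by intro x y hxy; simp only [Prod.ext_iff] at hxy ⊢; tauto) (fun ω => rfl)
  have c7 : cmiRV p (fun ω => (ω.u1, ω.v1)) (fun ω => (ω.u2, ω.v2))
      (fun ω => ((ω.u0, ω.v0), ω.z))
      = cmiRV p (fun ω => (ω.u1, ω.v1)) (fun ω => (ω.u2, ω.v2))
        (fun ω => (ω.z, (ω.u0, ω.v0))) :=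
    cmi_congrZ p _ _ (Z := fun ω => (ω.z, (ω.u0, ω.v0)))
      (g := fun t : Zc × (U0 × V0) => (t.2, t.1))
      (by intro x y hxy; simp only [Prod.ext_iff] at hxy ⊢; tauto) (fun ω => rfl)
  have c8 := cmi_symm p (fun ω => (ω.u1, ω.v1)) (fun ω => ω.z)
    (fun ω => ((ω.u2, ω.v2), (ω.u0, ω.v0)))
  have c9 := cmi_chain p (fun ω => ω.z) (fun ω => (ω.u2, ω.v2)) (fun ω => (ω.u1, ω.v1))
    (fun ω => (ω.u0, ω.v0))
  have c10 := cmi_symm p (fun ω => ω.z)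
    (fun ω => ((ω.u2, ω.v2), (ω.u1, ω.v1))) (fun ω => (ω.u0, ω.v0))
  have c11 : cmiRV p (fun ω => (ω.u1, ω.u2, ω.v1, ω.v2)) (fun ω => ω.z)
      (fun ω => (ω.u0, ω.v0))
      = cmiRV p (fun ω => ((ω.u2, ω.v2), (ω.u1, ω.v1))) (fun ω => ω.z)
        (fun ω => (ω.u0, ω.v0)) :=
    cmi_congrX p _ _ (X := fun ω => ((ω.u2, ω.v2), (ω.u1, ω.v1)))
      (g := fun t : (U2 × V2) × (U1 × V1) => (t.2.1, t.1.1, t.2.2, t.1.2))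
      (by intro x y hxy; simp only [Prod.ext_iff] at hxy ⊢; tauto) (fun ω => rfl)
  have c12 := cmi_symm p (fun ω => ω.z) (fun ω => (ω.u2, ω.v2)) (fun ω => (ω.u0, ω.v0))
  have step2 : cmiRV p (fun ω => (ω.u1, ω.v1)) (fun ω => (ω.u2, ω.v2))
      (fun ω => ((ω.u0, ω.v0), ω.z))
      ≤ cmiRV p (fun ω => (ω.u1, ω.v1)) (fun ω => (ω.u2, ω.v2)) (fun ω => (ω.u0, ω.v0))
        - cmiRV p (fun ω => ω.u1) (fun ω => ω.u2) (fun ω => ω.u0)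
        - cmiRV p (fun ω => ω.v1) (fun ω => ω.v2) (fun ω => ω.v0) := by
    linarith [c4, c5, c6, c7, c8, c9, c10, c11, c12, hconstr]
  -- step 3
  have c14 := cmi_chain p (fun ω => (ω.u1, ω.v1)) (fun ω => ω.u2) (fun ω => ω.v2)
    (fun ω => (ω.u0, ω.v0))
  have c15 := cmi_symm p (fun ω => (ω.u1, ω.v1)) (fun ω => ω.u2) (fun ω => (ω.u0, ω.v0))
  have c16 := cmi_chain p (fun ω => ω.u2) (fun ω => ω.u1) (fun ω => ω.v1)
    (fun ω => (ω.u0, ω.v0))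
  have c17 := cmi_chain p (fun ω => ω.u2) (fun ω => ω.v0) (fun ω => ω.u1) (fun ω => ω.u0)
  have c18 := cmi_chain p (fun ω => ω.u2) (fun ω => ω.u1) (fun ω => ω.v0) (fun ω => ω.u0)
  have c19 : cmiRV p (fun ω => ω.u2) (fun ω => (ω.v0, ω.u1)) (fun ω => ω.u0)
      = cmiRV p (fun ω => ω.u2) (fun ω => (ω.u1, ω.v0)) (fun ω => ω.u0) :=
    cmi_congrY p _ _ (Y := fun ω => (ω.u1, ω.v0)) (g := fun t : U1 × V0 => (t.2, t.1))
      (by intro x y hxy; simp only [Prod.ext_iff] at hxy ⊢; tauto) (fun ω => rfl)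
  have c20 : cmiRV p (fun ω => ω.u2) (fun ω => ω.u1) (fun ω => (ω.u0, ω.v0))
      = cmiRV p (fun ω => ω.u2) (fun ω => ω.u1) (fun ω => (ω.v0, ω.u0)) :=
    cmi_congrZ p _ _ (Z := fun ω => (ω.v0, ω.u0)) (g := fun t : V0 × U0 => (t.2, t.1))
      (by intro x y hxy; simp only [Prod.ext_iff] at hxy ⊢; tauto) (fun ω => rfl)
  have c21 := cmi_symm p (fun ω => ω.u2) (fun ω => ω.u1) (fun ω => ω.u0)
  have c22 := cmi_symm p (fun ω => (ω.u1, ω.v1)) (fun ω => ω.v2)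
    (fun ω => (ω.u2, (ω.u0, ω.v0)))
  have c23 := cmi_chain p (fun ω => ω.v2) (fun ω => ω.u1) (fun ω => ω.v1)
    (fun ω => (ω.u2, (ω.u0, ω.v0)))
  have c24 := cmi_chain p (fun ω => ω.v2) (fun ω => (ω.u1, (ω.u2, ω.u0))) (fun ω => ω.v1)
    (fun ω => ω.v0)
  have c25 := cmi_chain p (fun ω => ω.v2) (fun ω => ω.v1) (fun ω => (ω.u1, (ω.u2, ω.u0)))
    (fun ω => ω.v0)
  have c26 : cmiRV p (fun ω => ω.v2) (fun ω => (ω.v1, (ω.u1, (ω.u2, ω.u0))))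
      (fun ω => ω.v0)
      = cmiRV p (fun ω => ω.v2) (fun ω => ((ω.u1, (ω.u2, ω.u0)), ω.v1))
        (fun ω => ω.v0) :=
    cmi_congrY p _ _ (Y := fun ω => ((ω.u1, (ω.u2, ω.u0)), ω.v1))
      (g := fun t : (U1 × (U2 × U0)) × V1 => (t.2, t.1))
      (by intro x y hxy; simp only [Prod.ext_iff] at hxy ⊢; tauto) (fun ω => rfl)
  have c27 : cmiRV p (fun ω => ω.v2) (fun ω => ω.v1)
      (fun ω => (ω.u1, (ω.u2, (ω.u0, ω.v0))))
      = cmiRV p (fun ω => ω.v2) (fun ω => ω.v1)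
        (fun ω => ((ω.u1, (ω.u2, ω.u0)), ω.v0)) :=
    cmi_congrZ p _ _ (Z := fun ω => ((ω.u1, (ω.u2, ω.u0)), ω.v0))
      (g := fun t : (U1 × (U2 × U0)) × V0 => (t.1.1, (t.1.2.1, (t.1.2.2, t.2))))
      (by intro x y hxy; simp only [Prod.ext_iff] at hxy ⊢; tauto) (fun ω => rfl)
  have c28 := cmi_symm p (fun ω => ω.v2) (fun ω => ω.v1) (fun ω => ω.v0)
  have step3 : cmiRV p (fun ω => (ω.u1, ω.v1)) (fun ω => (ω.u2, ω.v2))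
      (fun ω => (ω.u0, ω.v0))
      = cmiRV p (fun ω => ω.u1) (fun ω => ω.u2) (fun ω => ω.u0)
        + cmiRV p (fun ω => ω.v1) (fun ω => ω.v2) (fun ω => ω.v0) := by
    linarith [c14, c15, c16, c17, c18, c19, c20, c21, c22, c23, c24, c25, c26, c27, c28,
      Zf1, Zf2, Z1, Z2, Z3, Z4]
  have hnn : 0 ≤ cmiRV p (fun ω => (ω.u1, ω.v1)) (fun ω => (ω.u2, ω.v2))
      (fun ω => (ω.q, ω.u0, ω.v0, ω.z)) := cmi_nonneg hpnn _ _ _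
  linarith [step1, step2, step3, hnn]
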